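/- Let k, m > 0 be real with 2k + 4m > 5. For 0 < α small set β(α) = π/2 − k·α, γ(α) = π/2 − m·α, w(α) = sin(α)/sin(α + β(α)), y(α) = sin(β(α))/sin(α + β(α)), d(α) = y(α)·sin(2α)/sin(2α + γ(α)), x(α) = y(α)·sin(γ(α))/sin(2α + γ(α)), R(α) = (3d(α) + 4w(α))/(2·(2 − x(α))), and E(α) = (w(α) + d(α))/(1 − x(α)). Then, as α → 0⁺: (i) (R(α)/sin(α) − 5)/sin²(α) → k² − 10k + (3/2)m² − 16m + 39/2, and (ii) sin(α)·E(α) → 6/(2k + 4m − 5). -/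

import Mathlib

open Real Filter Topology

noncomputable def betaKM (k α : ℝ) : ℝ := π / 2 - k * α

noncomputable def gammaKM (m α : ℝ) : ℝ := π / 2 - m * α

noncomputable def wKM (k α : ℝ) : ℝ := Real.sin α / Real.sin (α + betaKM k α)

noncomputable def yKM (k α : ℝ) : ℝ := Real.sin (betaKM k α) / Real.sin (α + betaKM k α)

noncomputable def dKM (k m α : ℝ) : ℝ :=
  yKM k α * Real.sin (2 * α) / Real.sin (2 * α + gammaKM m α)

noncomputable def xKM (k m α : ℝ) : ℝ :=
  yKM k α * Real.sin (gammaKM m α) / Real.sin (2 * α + gammaKM m α)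

noncomputable def RKM (k m α : ℝ) : ℝ :=
  (3 * dKM k m α + 4 * wKM k α) / (2 * (2 - xKM k m α))

noncomputable def EKM (k m α : ℝ) : ℝ := (wKM k α + dKM k m α) / (1 - xKM k m α)

private lemma sinL1 (c : ℝ) : Tendsto (fun α : ℝ => Real.sin (c * α) / α) (𝓝[>] (0:ℝ)) (𝓝 c) := by
  have h : HasDerivAt (fun α : ℝ => Real.sin (c * α)) c 0 := by
    have := (Real.hasDerivAt_sin (c * 0)).comp 0 ((hasDerivAt_id (0:ℝ)).const_mul c)
    simpa [Function.comp_def] using this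
  have h2 := hasDerivAt_iff_tendsto_slope.mp h
  have h3 : Tendsto (slope (fun α : ℝ => Real.sin (c * α)) 0) (𝓝[>] (0:ℝ)) (𝓝 c) :=
    h2.mono_left (nhdsWithin_mono _ fun x hx => ne_of_gt hx)
  refine h3.congr fun x => ?_
  simp [slope_def_field]

private lemma cosL (c : ℝ) : Tendsto (fun α : ℝ => Real.cos (c * α)) (𝓝[>] (0:ℝ)) (𝓝 1) := by
  have h : Continuous fun α : ℝ => Real.cos (c * α) :=
    Real.continuous_cos.comp (continuous_const.mul continuous_id)
  simpa using (h.tendsto 0).mono_left nhdsWithin_le_nhds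

private lemma cosL2 (c : ℝ) :
    Tendsto (fun α : ℝ => (1 - Real.cos (c * α)) / α ^ 2) (𝓝[>] (0:ℝ)) (𝓝 (c ^ 2 / 2)) := by
  apply HasDerivAt.lhopital_zero_nhdsGT
    (f' := fun α => c * Real.sin (c * α)) (g' := fun α => 2 * α)
  · filter_upwards with x
    have h1 := (Real.hasDerivAt_cos (c * x)).comp x ((hasDerivAt_id x).const_mul c)
    have h2 := (hasDerivAt_const x (1:ℝ)).sub h1
    exact h2.congr_deriv (by show (0:ℝ) - _ = c * Real.sin (c * x); ring)
  · filter_upwards with x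
    have := hasDerivAt_pow 2 x
    simpa using this
  · filter_upwards [self_mem_nhdsWithin] with x hx
    have : (0:ℝ) < x := hx
    positivity
  · have h : Continuous fun α : ℝ => 1 - Real.cos (c * α) := by continuity
    simpa using (h.tendsto 0).mono_left nhdsWithin_le_nhds
  · have h : Continuous fun α : ℝ => α ^ 2 := by continuity
    simpa using (h.tendsto 0).mono_left nhdsWithin_le_nhds
  · have h := (sinL1 c).const_mul (c / 2)
    have h2 : c / 2 * c = c ^ 2 / 2 := by ring
    rw [h2] at h
    exact h.congr fun x => by ring

private lemma sinL3 (c : ℝ) :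
    Tendsto (fun α : ℝ => (Real.sin (c * α) - c * α) / α ^ 3) (𝓝[>] (0:ℝ)) (𝓝 (-c ^ 3 / 6)) := by
  apply HasDerivAt.lhopital_zero_nhdsGT
    (f' := fun α => c * Real.cos (c * α) - c) (g' := fun α => 3 * α ^ 2)
  · filter_upwards with x
    have h1 := (Real.hasDerivAt_sin (c * x)).comp x ((hasDerivAt_id x).const_mul c)
    have h2 := h1.sub ((hasDerivAt_id x).const_mul c)
    exact h2.congr_deriv (by show Real.cos (c * x) * (c * 1) - c * 1 = c * Real.cos (c * x) - c; ring)
  · filter_upwards with x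
    have := hasDerivAt_pow 3 x
    norm_num at this
    exact this
  · filter_upwards [self_mem_nhdsWithin] with x hx
    have : (0:ℝ) < x := hx
    positivity
  · have h : Continuous fun α : ℝ => Real.sin (c * α) - c * α := by continuity
    simpa using (h.tendsto 0).mono_left nhdsWithin_le_nhds
  · have h : Continuous fun α : ℝ => α ^ 3 := by continuity
    simpa using (h.tendsto 0).mono_left nhdsWithin_le_nhds
  · have h := (cosL2 c).const_mul (-c / 3)
    have h2 : -c / 3 * (c ^ 2 / 2) = -c ^ 3 / 6 := by ring
    rw [h2] at h
    exact h.congr fun x => by ring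

private lemma keyG (k m α : ℝ) :
    Real.cos ((k-1)*α) * Real.cos ((m-2)*α) - Real.cos (k*α) * Real.cos (m*α) =
      (1/2) * ((1 - Real.cos ((k+m)*α)) + (1 - Real.cos ((k-m)*α))
        - (1 - Real.cos ((k+m-3)*α)) - (1 - Real.cos ((k-m+1)*α))) := by
  rw [show (k-1)*α = k*α - α by ring, show (m-2)*α = m*α - 2*α by ring,
    show (k+m)*α = k*α + m*α by ring, show (k-m)*α = k*α - m*α by ring,
    show (k+m-3)*α = (k*α - α) + (m*α - 2*α) by ring,
    show (k-m+1)*α = (k*α - α) - (m*α - 2*α) by ring]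
  simp only [Real.cos_add, Real.cos_sub, Real.sin_add, Real.sin_sub,
    Real.sin_two_mul, Real.cos_two_mul]
  ring

private lemma keyF (k m α : ℝ) :
    3 * Real.cos (k*α) * Real.sin (2*α) + 4 * Real.sin α * Real.cos ((m-2)*α)
      - 10 * Real.sin α * (2 * Real.cos ((k-1)*α) * Real.cos ((m-2)*α)
        - Real.cos (k*α) * Real.cos (m*α)) =
    (3/2) * (Real.sin ((2+k)*α) - (2+k)*α) + (3/2) * (Real.sin ((2-k)*α) - (2-k)*α)
    + 2 * (Real.sin ((m-1)*α) - (m-1)*α) + 2 * (Real.sin ((3-m)*α) - (3-m)*α)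
    + (-5) * (Real.sin ((k+m-2)*α) - (k+m-2)*α) + (-5) * (Real.sin ((4-k-m)*α) - (4-k-m)*α)
    + (-5) * (Real.sin ((k-m+2)*α) - (k-m+2)*α) + (-5) * (Real.sin ((m-k)*α) - (m-k)*α)
    + (5/2) * (Real.sin ((1+k+m)*α) - (1+k+m)*α) + (5/2) * (Real.sin ((1-k-m)*α) - (1-k-m)*α)
    + (5/2) * (Real.sin ((1+k-m)*α) - (1+k-m)*α) + (5/2) * (Real.sin ((1-k+m)*α) - (1-k+m)*α) := by
  rw [show (k-1)*α = k*α - α by ring, show (m-2)*α = m*α - 2*α by ring,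
    show (2+k)*α = 2*α + k*α by ring, show (2-k)*α = 2*α - k*α by ring,
    show (m-1)*α = m*α - α by ring, show (3-m)*α = α + (2*α - m*α) by ring,
    show (k+m-2)*α = k*α + (m*α - 2*α) by ring,
    show (4-k-m)*α = (2*α - k*α) + (2*α - m*α) by ring,
    show (k-m+2)*α = k*α - (m*α - 2*α) by ring, show (m-k)*α = m*α - k*α by ring,
    show (1+k+m)*α = α + (k*α + m*α) by ring, show (1-k-m)*α = α - (k*α + m*α) by ring,
    show (1+k-m)*α = α + (k*α - m*α) by ring, show (1-k+m)*α = α - (k*α - m*α) by ring]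
  simp only [Real.cos_add, Real.cos_sub, Real.sin_add, Real.sin_sub,
    Real.sin_two_mul, Real.cos_two_mul]
  linear_combination ((20:ℝ) * Real.sin (k*α) * Real.cos (m*α) + (4:ℝ) * Real.cos α * Real.sin (m*α) + (-20:ℝ) * Real.cos α^2 * Real.cos (k*α) * Real.sin (m*α) + (-20:ℝ) * Real.cos α^2 * Real.sin (k*α) * Real.cos (m*α) + (-40:ℝ) * Real.sin α * Real.cos α * Real.sin (k*α) * Real.sin (m*α)) * (Real.sin_sq_add_cos_sq α)

theorem stmt19 (k m : ℝ) (hk : 0 < k) (hm : 0 < m) (hkm : 5 < 2 * k + 4 * m) :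
    Tendsto (fun α : ℝ => (RKM k m α / Real.sin α - 5) / (Real.sin α) ^ 2)
        (𝓝[>] 0) (𝓝 (k ^ 2 - 10 * k + 3 / 2 * m ^ 2 - 16 * m + 39 / 2)) ∧
      Tendsto (fun α : ℝ => Real.sin α * EKM k m α)
        (𝓝[>] 0) (𝓝 (6 / (2 * k + 4 * m - 5))) := by
  have hsab : ∀ α : ℝ, Real.sin (α + betaKM k α) = Real.cos ((k-1)*α) := fun α => by
    rw [betaKM, show α + (π/2 - k*α) = π/2 - (k-1)*α by ring, Real.sin_pi_div_two_sub]
  have hsb : ∀ α : ℝ, Real.sin (betaKM k α) = Real.cos (k*α) := fun α => by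
    rw [betaKM, Real.sin_pi_div_two_sub]
  have hsag : ∀ α : ℝ, Real.sin (2*α + gammaKM m α) = Real.cos ((m-2)*α) := fun α => by
    rw [gammaKM, show 2*α + (π/2 - m*α) = π/2 - (m-2)*α by ring, Real.sin_pi_div_two_sub]
  have hsg : ∀ α : ℝ, Real.sin (gammaKM m α) = Real.cos (m*α) := fun α => by
    rw [gammaKM, Real.sin_pi_div_two_sub]
  -- basic eventual facts
  have hpos : ∀ᶠ α : ℝ in 𝓝[>] (0:ℝ), 0 < α := eventually_mem_nhdsWithin
  have hid : Tendsto (fun α : ℝ => α) (𝓝[>] (0:ℝ)) (𝓝 0) :=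
    tendsto_id.mono_left nhdsWithin_le_nhds
  have hsmall : ∀ᶠ α : ℝ in 𝓝[>] (0:ℝ), α < 1 := hid.eventually (eventually_lt_nhds zero_lt_one)
  have hsinpos : ∀ᶠ α : ℝ in 𝓝[>] (0:ℝ), 0 < Real.sin α := by
    filter_upwards [hpos, hsmall] with α h1 h2
    exact Real.sin_pos_of_pos_of_lt_pi h1 (lt_trans h2 (by linarith [Real.pi_gt_three]))
  have hone : Tendsto (fun α : ℝ => Real.sin α / α) (𝓝[>] (0:ℝ)) (𝓝 1) := by
    simpa using sinL1 1
  have hC1ne : ∀ᶠ α : ℝ in 𝓝[>] (0:ℝ), Real.cos ((k-1)*α) ≠ 0 :=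
    (cosL (k-1)).eventually_ne one_ne_zero
  have hC2ne : ∀ᶠ α : ℝ in 𝓝[>] (0:ℝ), Real.cos ((m-2)*α) ≠ 0 :=
    (cosL (m-2)).eventually_ne one_ne_zero
  -- D₁
  have hD1 : Tendsto (fun α : ℝ => 2 * Real.cos ((k-1)*α) * Real.cos ((m-2)*α)
      - Real.cos (k*α) * Real.cos (m*α)) (𝓝[>] (0:ℝ)) (𝓝 1) := by
    have h := ((((cosL (k-1)).mul (cosL (m-2))).const_mul 2).sub ((cosL k).mul (cosL m)))
    rw [show (2:ℝ) * (1 * 1) - 1 * 1 = 1 by norm_num] at h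
    exact h.congr fun α => by ring
  have hD1ne : ∀ᶠ α : ℝ in 𝓝[>] (0:ℝ), 2 * Real.cos ((k-1)*α) * Real.cos ((m-2)*α)
      - Real.cos (k*α) * Real.cos (m*α) ≠ 0 := hD1.eventually_ne one_ne_zero
  -- G / α² limit
  have hG2 : Tendsto (fun α : ℝ => (Real.cos ((k-1)*α) * Real.cos ((m-2)*α)
      - Real.cos (k*α) * Real.cos (m*α)) / α ^ 2) (𝓝[>] (0:ℝ)) (𝓝 ((2*k+4*m-5)/2)) := by
    have h := ((((cosL2 (k+m)).add (cosL2 (k-m))).sub (cosL2 (k+m-3))).sub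
        (cosL2 (k-m+1))).const_mul (1/2 : ℝ)
    rw [show (1/2 : ℝ) * ((k+m)^2/2 + (k-m)^2/2 - (k+m-3)^2/2 - (k-m+1)^2/2)
        = (2*k+4*m-5)/2 by ring] at h
    refine h.congr fun α => ?_
    rw [keyG k m α]
    ring
  have hGhalf : (0:ℝ) < (2*k+4*m-5)/2 := by linarith
  have hGpos : ∀ᶠ α : ℝ in 𝓝[>] (0:ℝ), 0 < Real.cos ((k-1)*α) * Real.cos ((m-2)*α)
      - Real.cos (k*α) * Real.cos (m*α) := by
    filter_upwards [hG2.eventually (eventually_gt_nhds hGhalf), hpos] with α hq hα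
    have h2 := mul_pos hq (pow_pos hα 2)
    rwa [div_mul_cancel₀ _ (by positivity : (α:ℝ) ^ 2 ≠ 0)] at h2
  constructor
  · -- part (i)
    have hF : Tendsto (fun α : ℝ => (3 * Real.cos (k*α) * Real.sin (2*α)
        + 4 * Real.sin α * Real.cos ((m-2)*α)
        - 10 * Real.sin α * (2 * Real.cos ((k-1)*α) * Real.cos ((m-2)*α)
          - Real.cos (k*α) * Real.cos (m*α))) / α ^ 3) (𝓝[>] (0:ℝ))
        (𝓝 (2 * (k ^ 2 - 10 * k + 3 / 2 * m ^ 2 - 16 * m + 39 / 2))) := by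
      have h := (((((((((((((sinL3 (2+k)).const_mul (3/2 : ℝ)).add
        ((sinL3 (2-k)).const_mul (3/2 : ℝ))).add
        ((sinL3 (m-1)).const_mul (2 : ℝ))).add
        ((sinL3 (3-m)).const_mul (2 : ℝ))).add
        ((sinL3 (k+m-2)).const_mul (-5 : ℝ))).add
        ((sinL3 (4-k-m)).const_mul (-5 : ℝ))).add
        ((sinL3 (k-m+2)).const_mul (-5 : ℝ))).add
        ((sinL3 (m-k)).const_mul (-5 : ℝ))).add
        ((sinL3 (1+k+m)).const_mul (5/2 : ℝ))).add
        ((sinL3 (1-k-m)).const_mul (5/2 : ℝ))).add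
        ((sinL3 (1+k-m)).const_mul (5/2 : ℝ))).add
        ((sinL3 (1-k+m)).const_mul (5/2 : ℝ)))
      rw [show (3/2 : ℝ) * (-(2+k)^3/6) + (3/2 : ℝ) * (-(2-k)^3/6)
        + (2 : ℝ) * (-(m-1)^3/6) + (2 : ℝ) * (-(3-m)^3/6)
        + (-5 : ℝ) * (-(k+m-2)^3/6) + (-5 : ℝ) * (-(4-k-m)^3/6)
        + (-5 : ℝ) * (-(k-m+2)^3/6) + (-5 : ℝ) * (-(m-k)^3/6)
        + (5/2 : ℝ) * (-(1+k+m)^3/6) + (5/2 : ℝ) * (-(1-k-m)^3/6)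
        + (5/2 : ℝ) * (-(1+k-m)^3/6) + (5/2 : ℝ) * (-(1-k+m)^3/6)
        = 2 * (k ^ 2 - 10 * k + 3 / 2 * m ^ 2 - 16 * m + 39 / 2) by ring] at h
      refine h.congr fun α => ?_
      rw [keyF k m α]
      ring
    have hden : Tendsto (fun α : ℝ => 2 * (2 * Real.cos ((k-1)*α) * Real.cos ((m-2)*α)
        - Real.cos (k*α) * Real.cos (m*α)) * (Real.sin α / α) ^ 3) (𝓝[>] (0:ℝ)) (𝓝 2) := by
      have h := (hD1.const_mul 2).mul (hone.pow 3)
      rw [show (2:ℝ) * 1 * 1 ^ 3 = 2 by norm_num] at h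
      exact h
    have hmain := hF.div hden two_ne_zero
    rw [show 2 * (k ^ 2 - 10 * k + 3 / 2 * m ^ 2 - 16 * m + 39 / 2) / 2
        = k ^ 2 - 10 * k + 3 / 2 * m ^ 2 - 16 * m + 39 / 2 by ring] at hmain
    refine hmain.congr' ?_
    filter_upwards [hpos, hC1ne, hC2ne, hD1ne, hsinpos] with α h0 h1 h2 h3 h4
    have h0' : α ≠ 0 := ne_of_gt h0
    have h4' : Real.sin α ≠ 0 := ne_of_gt h4
    simp only [Pi.div_apply, RKM, wKM, dKM, xKM, yKM]
    rw [hsab α, hsb α, hsg α, hsag α]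
    have h2x : (2:ℝ) - Real.cos (k*α) / Real.cos ((k-1)*α) * Real.cos (m*α) / Real.cos ((m-2)*α)
        = (2 * Real.cos ((k-1)*α) * Real.cos ((m-2)*α) - Real.cos (k*α) * Real.cos (m*α))
          / (Real.cos ((k-1)*α) * Real.cos ((m-2)*α)) := by
      generalize Real.cos ((k-1)*α) = A at *; generalize Real.cos ((m-2)*α) = B at *
      field_simp
    rw [h2x]
    generalize Real.cos ((k-1)*α) = A at *; generalize Real.cos ((m-2)*α) = B at *
    generalize Real.cos (k*α) = C at *; generalize Real.cos (m*α) = D at *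
    have h3'' : -(C*D) + B*A*2 ≠ 0 := by rwa [show -(C*D) + B*A*2 = 2*A*B - C*D by ring]
    field_simp
    linear_combination (-10 * Real.sin α) * mul_inv_cancel₀ h3''
  · -- part (ii)
    have hN2 : Tendsto (fun α : ℝ => Real.sin α / α * Real.cos ((m-2)*α)
        + Real.cos (k*α) * (Real.sin (2*α) / α)) (𝓝[>] (0:ℝ)) (𝓝 3) := by
      have h := (hone.mul (cosL (m-2))).add ((cosL k).mul (sinL1 2))
      rw [show (1:ℝ) * 1 + 1 * 2 = 3 by norm_num] at h
      exact h
    have hmain := (hone.mul hN2).div hG2 (ne_of_gt hGhalf)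
    rw [show (1:ℝ) * 3 / ((2*k+4*m-5)/2) = 6 / (2 * k + 4 * m - 5) by
      rw [div_eq_div_iff (by linarith) (by linarith)]; ring] at hmain
    refine hmain.congr' ?_
    filter_upwards [hpos, hC1ne, hC2ne, hGpos] with α h0 h1 h2 h3
    have h0' : α ≠ 0 := ne_of_gt h0
    have h3' : Real.cos ((k-1)*α) * Real.cos ((m-2)*α)
        - Real.cos (k*α) * Real.cos (m*α) ≠ 0 := ne_of_gt h3
    simp only [Pi.div_apply, EKM, wKM, dKM, xKM, yKM]
    rw [hsab α, hsb α, hsg α, hsag α]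
    generalize Real.cos ((k-1)*α) = A at *; generalize Real.cos ((m-2)*α) = B at *
    field_simp
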